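/- Let B be a skew brace such that B³ = 0, with (B,+) nilpotent of class m and (B²,+) nilpotent of class r. Let Z_n(B²,+) be the n-th term of the upper central series of (B²,+) and set S_n = {a ∈ B² : a∗b ∈ Z_n(B²,+) for all b ∈ B}. Then B^{(2+m·k)} ⊆ S_{r−k} for every 1 ≤ k ≤ r, where B^{(n)} denotes the n-th term of the right series of B. -/

import Mathlib

/-- A (left) skew brace: a set with two group structures `(B,+)` and `(B,·)`
satisfying `a·(b+c) = a·b - a + a·c`. -/
class SkewBrace (B : Type*) extends AddGroup B, Group B where
  mul_add_compat : ∀ a b c : B, a * (b + c) = a * b - a + a * c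

namespace SkewBrace

variable {B : Type*} [SkewBrace B]

/-- The star product `a ∗ b = -a + a·b - b`. -/
def star (a b : B) : B := -a + a * b - b

/-- For subsets `X, Y ⊆ B`, `X ∗ Y` is the additive subgroup generated by
all `x ∗ y` with `x ∈ X`, `y ∈ Y`. -/
def starSet (X Y : Set B) : AddSubgroup B :=
  AddSubgroup.closure (Set.image2 star X Y)

/-- The left series, indexed so that `leftSeries B n = B^{n+1}`:
`leftSeries B 0 = B¹ = B` and `leftSeries B (n+1) = B ∗ leftSeries B n`. -/
def leftSeries (B : Type*) [SkewBrace B] : ℕ → AddSubgroup B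
  | 0 => ⊤
  | n + 1 => starSet Set.univ (leftSeries B n)

/-- The right series, indexed so that `rightSeries B n = B^{(n+1)}`:
`rightSeries B 0 = B^{(1)} = B` and `rightSeries B (n+1) = (rightSeries B n) ∗ B`. -/
def rightSeries (B : Type*) [SkewBrace B] : ℕ → AddSubgroup B
  | 0 => ⊤
  | n + 1 => starSet (rightSeries B n : Set B) Set.univ

end SkewBrace

namespace SkewBrace

/-- The `n`-th term of the upper central series of the additive group `(B²,+)`,
viewed as a subset of `B`. -/
def upperCentralSet (B : Type*) [SkewBrace B] (n : ℕ) : Set B :=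
  {x : B | ∃ hx : x ∈ leftSeries B 1,
    Multiplicative.ofAdd (⟨x, hx⟩ : ↥(leftSeries B 1)) ∈
      upperCentralSeries (Multiplicative ↥(leftSeries B 1)) n}

/-- `S_n = {a ∈ B² : a ∗ b ∈ Z_n(B²,+) for all b ∈ B}`. -/
def Sset (B : Type*) [SkewBrace B] (n : ℕ) : Set B :=
  {a : B | a ∈ leftSeries B 1 ∧ ∀ b : B, star a b ∈ upperCentralSet B n}

end SkewBrace

set_option maxHeartbeats 1000000
namespace SkewBrace

variable {B : Type*} [SkewBrace B]

lemma mul_zero' (a : B) : a * (0 : B) = a := by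
  have h := mul_add_compat a 0 0
  rw [add_zero, sub_eq_add_neg, add_assoc] at h
  have h2 : -(a*0) + (a*0) = -(a*0) + ((a*0) + (-a + a*0)) := by rw [← h]
  rw [neg_add_cancel, neg_add_cancel_left] at h2
  have h3 : a + (0:B) = a + (-a + a * 0) := by rw [← h2]
  rw [add_zero, add_neg_cancel_left] at h3
  exact h3.symm

lemma zero_eq_one : (0 : B) = 1 := by
  have := mul_zero' (1 : B)
  rwa [one_mul] at this

lemma zero_mul' (b : B) : (0 : B) * b = b := by rw [zero_eq_one, one_mul]

lemma star_zero_right (a : B) : star a 0 = 0 := by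
  rw [star, mul_zero', sub_zero, neg_add_cancel]

lemma star_zero_left (b : B) : star 0 b = 0 := by
  rw [star, zero_mul', neg_zero, zero_add, sub_self]

lemma mul_eq_add_star (a b : B) : a * b = a + star a b + b := by
  rw [star, sub_eq_add_neg, ← add_assoc, add_neg_cancel_left, add_assoc,
    neg_add_cancel, add_zero]

/-- F5 -/
lemma star_add_right (a b c : B) : star a (b + c) = star a b + b + star a c - b := by
  rw [star, star, star, mul_add_compat]
  simp only [sub_eq_add_neg, neg_add_rev, add_assoc]
  congr 2
  rw [← add_assoc (-b) b, neg_add_cancel, zero_add]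

/-- conj-star identity -/
lemma conj_star (a b c : B) : b + star a c - b = -(star a b) + star a (b + c) := by
  rw [star_add_right, sub_eq_add_neg, sub_eq_add_neg]
  simp only [← add_assoc, neg_add_cancel, zero_add]

lemma star_mem_B2 (a b : B) : star a b ∈ leftSeries B 1 := by
  apply AddSubgroup.subset_closure
  exact Set.mem_image2_of_mem trivial (by
    show b ∈ ((⊤ : AddSubgroup B) : Set B); simp)

end SkewBrace

namespace SkewBrace

variable {B : Type*} [SkewBrace B]

section B3

variable (hb : ∀ x z : B, z ∈ leftSeries B 1 → star x z = 0)
include hb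

lemma mul_b2 {z : B} (hz : z ∈ leftSeries B 1) (x : B) : x * z = x + z := by
  have h := hb x z hz
  rw [star, sub_eq_zero] at h
  calc x * z = x + (-x + x * z) := (add_neg_cancel_left _ _).symm
    _ = x + z := by rw [h]

/-- the map `g_d : (B,·) → (B²,+)` is an anti-homomorphism -/
lemma anti_hom (x y c : B) : star (x * y) c = star y c + star x c := by
  have h1 : x * (y * c) = x * y + (star y c + (-x + x * c)) := by
    rw [mul_eq_add_star y c, add_assoc, mul_add_compat, mul_add_compat,
      mul_b2 hb (star_mem_B2 y c)]
    simp only [sub_eq_add_neg, add_assoc, neg_add_cancel_left]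
  rw [star, mul_assoc, h1, star, star]
  simp only [sub_eq_add_neg, add_assoc, neg_add_cancel_left]

lemma anti_add {z : B} (hz : z ∈ leftSeries B 1) (x d : B) :
    star (x + z) d = star z d + star x d := by
  rw [← mul_b2 hb hz, anti_hom hb]

lemma neg_star {z : B} (hz : z ∈ leftSeries B 1) (d : B) :
    star (-z) d = -(star z d) := by
  have h := anti_add hb hz (-z) d
  rw [neg_add_cancel, star_zero_left] at h
  exact (neg_eq_of_add_eq_zero_right h.symm).symm

/-- the letter of a star only matters modulo B² -/
lemma star_letter {δ : B} (hδ : δ ∈ leftSeries B 1) (v ℓ : B) :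
    star v (ℓ + δ) = star v ℓ := by
  rw [star_add_right, hb v δ hδ, add_zero, add_sub_cancel_right]

end B3

lemma conj_mem_B2 {x : B} (hx : x ∈ leftSeries B 1) (g : B) :
    g + x - g ∈ leftSeries B 1 := by
  have hmem : x ∈ AddSubgroup.closure (Set.image2 star Set.univ
      ((leftSeries B 0 : AddSubgroup B) : Set B)) := hx
  clear hx
  induction hmem using AddSubgroup.closure_induction with
  | mem y hy =>
    obtain ⟨a, -, c, -, rfl⟩ := hy
    rw [conj_star]
    exact AddSubgroup.add_mem _ (AddSubgroup.neg_mem _ (star_mem_B2 a g)) (star_mem_B2 a (g + c))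
  | zero => simpa using AddSubgroup.zero_mem _
  | add y z hy hz hy' hz' =>
    have : g + (y + z) - g = (g + y - g) + (g + z - g) := by
      simp only [sub_eq_add_neg, add_assoc, neg_add_cancel_left]
    rw [this]; exact AddSubgroup.add_mem _ hy' hz'
  | neg y hy hy' =>
    have : g + (-y) - g = -(g + y - g) := by
      simp only [sub_eq_add_neg, neg_add_rev, neg_neg, add_assoc]
    rw [this]; exact AddSubgroup.neg_mem _ hy'

end SkewBrace

namespace SkewBrace

variable {B : Type*} [SkewBrace B]

/-- conjugation `c_g(x) = g + x - g` -/
def cg (g x : B) : B := g + x - g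

/-- commutator defect `ρ_X(c) = -X + c + X - c` -/
def rho (X c : B) : B := -X + (cg c X)

lemma cg_zero_right (g : B) : cg g 0 = 0 := by simp [cg]

lemma cg_zero_left (x : B) : cg 0 x = x := by simp [cg]

lemma cg_cg (g h x : B) : cg g (cg h x) = cg (g + h) x := by
  simp only [cg, sub_eq_add_neg, neg_add_rev, add_assoc]

lemma cg_add (g x y : B) : cg g (x + y) = cg g x + cg g y := by
  simp only [cg, sub_eq_add_neg, add_assoc, neg_add_cancel_left]

lemma cg_neg (g x : B) : cg g (-x) = -(cg g x) := by
  simp only [cg, sub_eq_add_neg, neg_add_rev, neg_neg, add_assoc]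

lemma cg_mem_B2 {x : B} (hx : x ∈ leftSeries B 1) (g : B) : cg g x ∈ leftSeries B 1 :=
  conj_mem_B2 hx g

lemma rho_mem_B2 {X : B} (hX : X ∈ leftSeries B 1) (c : B) : rho X c ∈ leftSeries B 1 :=
  AddSubgroup.add_mem _ (AddSubgroup.neg_mem _ hX) (cg_mem_B2 hX c)

lemma rho_zero (c : B) : rho 0 c = 0 := by simp [rho, cg]

/-- (V) -/
lemma rho_add (P Q c : B) : rho (P + Q) c = cg (-Q) (rho P c) + rho Q c := by
  simp only [rho, cg, sub_eq_add_neg, neg_add_rev, neg_neg, add_assoc,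
    neg_add_cancel_left, add_neg_cancel_left]

/-- (VI) -/
lemma rho_neg (P c : B) : rho (-P) c = cg P (-(rho P c)) := by
  simp only [rho, cg, sub_eq_add_neg, neg_add_rev, neg_neg, add_assoc,
    neg_add_cancel_left, add_neg_cancel_left, add_neg_cancel, neg_add_cancel,
    add_zero, zero_add]

/-- (VII) -/
lemma rho_conj (u X c : B) : rho (cg u X) c = cg u (rho X (-u + c + u)) := by
  simp only [rho, cg, sub_eq_add_neg, neg_add_rev, neg_neg, add_assoc,
    neg_add_cancel_left, add_neg_cancel_left, add_neg_cancel, neg_add_cancel,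
    add_zero, zero_add]

/-- (VIII) -/
lemma rho_cocycle (X α β : B) : rho X (α + β) = rho X α + cg α (rho X β) := by
  simp only [rho, cg, sub_eq_add_neg, neg_add_rev, neg_neg, add_assoc,
    neg_add_cancel_left, add_neg_cancel_left]

/-- conj-star in `cg` notation -/
lemma cg_star (g a c : B) : cg g (star a c) = -(star a g) + star a (g + c) := by
  rw [cg, conj_star]

section B3

variable (hb : ∀ x z : B, z ∈ leftSeries B 1 → star x z = 0)
include hb

/-- F8 : star of a B²-conjugate -/
lemma star_conj_b2 {u w : B} (hu : u ∈ leftSeries B 1) (hw : w ∈ leftSeries B 1) (d : B) :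
    star (cg u w) d = -(star u d) + (star w d + star u d) := by
  have h1 : cg u w = (u * w) * (-u) := by
    rw [mul_b2 hb hw u, mul_b2 hb (AddSubgroup.neg_mem _ hu) (u + w), cg, sub_eq_add_neg]
  rw [h1, anti_hom hb, anti_hom hb, neg_star hb hu]

/-- GOLD (IV): reduction of a double star to the star of a commutator -/
lemma gold {w : B} (hw : w ∈ leftSeries B 1) (e d : B) :
    star (star w e) d =
      star (cg e w) d + (star (-e) d + (-(star w d) + -(star (-e) d))) := by
  have key : ∀ c : B, star (star w (-c)) d =
      star (-c + w + c) d + (star c d + (-(star w d) + -(star c d))) := by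
    intro c
    have A : star (w * c) d = star c d + star w d := anti_hom hb w c d
    have Bd : w * c = (w + c) + (-(star w (-c))) := by
      have hσ : -c + star w c + c = -(star w (-c)) := by
        have h := conj_star w (-c) c
        rw [neg_add_cancel, star_zero_right, add_zero, sub_neg_eq_add] at h
        exact h
      rw [mul_eq_add_star w c, ← hσ]
      simp only [add_assoc, neg_add_cancel_left]
      rw [← add_assoc c (-c), add_neg_cancel, zero_add]
    have C : star ((w + c) + (-(star w (-c)))) d
        = star (-(star w (-c))) d + star (w + c) d :=
      anti_add hb (AddSubgroup.neg_mem _ (star_mem_B2 w (-c))) _ d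
    have D : star (w + c) d = star (-c + w + c) d + star c d := by
      have hz : -c + w + c ∈ leftSeries B 1 := by
        have := conj_mem_B2 hw (-c)
        simpa [sub_eq_add_neg, add_assoc] using this
      have hd : w + c = c + (-c + w + c) := by
        simp only [← add_assoc, add_neg_cancel, zero_add]
      rw [hd, anti_add hb hz]
    have E : star (-(star w (-c))) d = -(star (star w (-c)) d) :=
      neg_star hb (star_mem_B2 w (-c)) d
    have comb : star c d + star w d
        = -(star (star w (-c)) d) + (star (-c + w + c) d + star c d) := by
      rw [← A, Bd, C, E, D]
    have : star (star w (-c)) d + (star c d + star w d)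
        = star (-c + w + c) d + star c d := by
      rw [comb, ← add_assoc, add_neg_cancel, zero_add]
    calc star (star w (-c)) d
        = star (star w (-c)) d + (star c d + star w d)
          + (-(star w d) + -(star c d)) := by
          simp only [add_assoc, add_neg_cancel_left, add_neg_cancel, add_zero]
      _ = star (-c + w + c) d + star c d + (-(star w d) + -(star c d)) := by rw [this]
      _ = _ := by simp only [add_assoc]
  have h := key (-e)
  rw [neg_neg] at h
  rw [h, cg, sub_eq_add_neg]

end B3

end SkewBrace

namespace SkewBrace

variable {B : Type*} [SkewBrace B]

/- ---------------- R-series facts ---------------- -/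

lemma R_one : rightSeries B 1 = leftSeries B 1 := by
  show starSet ((⊤ : AddSubgroup B) : Set B) Set.univ
      = starSet Set.univ ((⊤ : AddSubgroup B) : Set B)
  rw [AddSubgroup.coe_top]

lemma star_mem_R {v : B} {i : ℕ} (hv : v ∈ rightSeries B i) (e : B) :
    star v e ∈ rightSeries B (i + 1) := by
  apply AddSubgroup.subset_closure
  exact Set.mem_image2_of_mem hv trivial

lemma R_succ_le (i : ℕ) : rightSeries B (i + 1) ≤ rightSeries B i := by
  induction i with
  | zero => exact le_top
  | succ i ih =>
    show starSet (rightSeries B (i+1) : Set B) Set.univ ≤ _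
    rw [starSet]
    apply AddSubgroup.closure_le _ |>.mpr
    rintro x ⟨v, hv, e, -, rfl⟩
    exact star_mem_R (ih hv) e

lemma R_le_of_le {i j : ℕ} (h : i ≤ j) : rightSeries B j ≤ rightSeries B i := by
  induction j with
  | zero => rw [Nat.le_zero.mp h]
  | succ j ih =>
    rcases Nat.lt_or_ge i (j+1) with hlt | hge
    · exact le_trans (R_succ_le j) (ih (Nat.lt_succ_iff.mp hlt))
    · rw [Nat.le_antisymm h hge]

lemma R_le_B2 {i : ℕ} (hi : 1 ≤ i) : rightSeries B i ≤ leftSeries B 1 := by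
  rw [← R_one]; exact R_le_of_le hi

lemma conj_mem_R {x : B} {i : ℕ} (hx : x ∈ rightSeries B (i + 1)) (g : B) :
    g + x - g ∈ rightSeries B (i + 1) := by
  have hmem : x ∈ AddSubgroup.closure (Set.image2 star
      ((rightSeries B i : AddSubgroup B) : Set B) Set.univ) := hx
  clear hx
  induction hmem using AddSubgroup.closure_induction with
  | mem y hy =>
    obtain ⟨a, ha, c, -, rfl⟩ := hy
    rw [conj_star]
    exact AddSubgroup.add_mem _ (AddSubgroup.neg_mem _ (star_mem_R ha g))
      (star_mem_R ha (g + c))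
  | zero => simpa using AddSubgroup.zero_mem _
  | add y z hy hz hy' hz' =>
    have : g + (y + z) - g = (g + y - g) + (g + z - g) := by
      simp only [sub_eq_add_neg, add_assoc, neg_add_cancel_left]
    rw [this]; exact AddSubgroup.add_mem _ hy' hz'
  | neg y hy hy' =>
    have : g + (-y) - g = -(g + y - g) := by
      simp only [sub_eq_add_neg, neg_add_rev, neg_neg, add_assoc]
    rw [this]; exact AddSubgroup.neg_mem _ hy'

lemma cg_mem_R {x : B} {i : ℕ} (hx : x ∈ rightSeries B (i + 1)) (g : B) :
    cg g x ∈ rightSeries B (i + 1) := conj_mem_R hx g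

lemma rho_mem_R {x : B} {i : ℕ} (hx : x ∈ rightSeries B (i + 1)) (c : B) :
    rho x c ∈ rightSeries B (i + 1) :=
  AddSubgroup.add_mem _ (AddSubgroup.neg_mem _ hx) (cg_mem_R hx c)

/- ---------------- Z-set facts ---------------- -/

lemma zs_mem_B2 {x : B} {j : ℕ} (h : x ∈ upperCentralSet B j) : x ∈ leftSeries B 1 :=
  h.1

lemma zs_zero (j : ℕ) : (0 : B) ∈ upperCentralSet B j := by
  refine ⟨AddSubgroup.zero_mem _, ?_⟩
  have : (⟨(0:B), AddSubgroup.zero_mem _⟩ : ↥(leftSeries B 1)) = 0 := rfl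
  rw [this, ofAdd_zero]
  exact one_mem _

lemma zs_add {x y : B} {j : ℕ} (hx : x ∈ upperCentralSet B j)
    (hy : y ∈ upperCentralSet B j) : x + y ∈ upperCentralSet B j := by
  obtain ⟨mx, px⟩ := hx
  obtain ⟨my, py⟩ := hy
  refine ⟨AddSubgroup.add_mem _ mx my, ?_⟩
  have : (⟨x + y, AddSubgroup.add_mem _ mx my⟩ : ↥(leftSeries B 1))
      = ⟨x, mx⟩ + ⟨y, my⟩ := rfl
  rw [this, ofAdd_add]
  exact mul_mem px py

lemma zs_neg {x : B} {j : ℕ} (hx : x ∈ upperCentralSet B j) :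
    -x ∈ upperCentralSet B j := by
  obtain ⟨mx, px⟩ := hx
  refine ⟨AddSubgroup.neg_mem _ mx, ?_⟩
  have : (⟨-x, AddSubgroup.neg_mem _ mx⟩ : ↥(leftSeries B 1)) = -(⟨x, mx⟩) := rfl
  rw [this, ofAdd_neg]
  exact inv_mem px

lemma zs_conj {x u : B} {j : ℕ} (hx : x ∈ upperCentralSet B j)
    (hu : u ∈ leftSeries B 1) : u + x - u ∈ upperCentralSet B j := by
  obtain ⟨mx, px⟩ := hx
  have hm : u + x - u ∈ leftSeries B 1 :=
    AddSubgroup.sub_mem _ (AddSubgroup.add_mem _ hu mx) hu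
  refine ⟨hm, ?_⟩
  have h1 : (⟨u + x - u, hm⟩ : ↥(leftSeries B 1)) = ⟨u, hu⟩ + ⟨x, mx⟩ - ⟨u, hu⟩ := rfl
  rw [h1, sub_eq_add_neg, ofAdd_add, ofAdd_add, ofAdd_neg]
  have := (inferInstance : (Subgroup.upperCentralSeries (Multiplicative ↥(leftSeries B 1)) j).Normal).conj_mem
    _ px (Multiplicative.ofAdd ⟨u, hu⟩)
  exact this

lemma zs_comm {x u : B} {j : ℕ} (hx : x ∈ upperCentralSet B (j + 1))
    (hu : u ∈ leftSeries B 1) : x + u - x - u ∈ upperCentralSet B j := by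
  obtain ⟨mx, px⟩ := hx
  have hm : x + u - x - u ∈ leftSeries B 1 :=
    AddSubgroup.sub_mem _ (AddSubgroup.sub_mem _ (AddSubgroup.add_mem _ mx hu) mx) hu
  refine ⟨hm, ?_⟩
  have h1 : (⟨x + u - x - u, hm⟩ : ↥(leftSeries B 1))
      = ⟨x, mx⟩ + ⟨u, hu⟩ - ⟨x, mx⟩ - ⟨u, hu⟩ := rfl
  rw [h1, sub_eq_add_neg, sub_eq_add_neg, ofAdd_add, ofAdd_add, ofAdd_add,
    ofAdd_neg, ofAdd_neg]
  have := mem_upperCentralSeries_succ_iff.mp px (Multiplicative.ofAdd ⟨u, hu⟩)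
  simp only [commutatorElement_def] at this
  exact this

lemma zs_bot {x : B} (h : x ∈ upperCentralSet B 0) : x = 0 := by
  obtain ⟨mx, px⟩ := h
  rw [show upperCentralSeries (Multiplicative ↥(leftSeries B 1)) 0 = ⊥ from rfl, Subgroup.mem_bot] at px
  have : (⟨x, mx⟩ : ↥(leftSeries B 1)) = 0 := px
  exact congrArg Subtype.val this

end SkewBrace

namespace SkewBrace

variable {B : Type*} [SkewBrace B]

/- ---------------- lower central series facts ---------------- -/

open scoped commutatorElement in
lemma lcs_rho {X : B} {j : ℕ}
    (hX : Multiplicative.ofAdd X ∈ (⊤ : Subgroup (Multiplicative B)).lowerCentralSeries j) (y : B) :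
    Multiplicative.ofAdd (rho X y) ∈ (⊤ : Subgroup (Multiplicative B)).lowerCentralSeries (j + 1) := by
  have h1 : rho X y = (-X) + y + (-(-X)) + (-y) := by
    simp only [rho, cg, sub_eq_add_neg, neg_neg, add_assoc]
  have h2 : Multiplicative.ofAdd (rho X y)
      = ⁅Multiplicative.ofAdd (-X), Multiplicative.ofAdd y⁆ := by
    rw [commutatorElement_def, h1]
    simp only [ofAdd_add, ofAdd_neg]
  rw [h2, lowerCentralSeries_succ]
  apply Subgroup.subset_closure
  refine ⟨Multiplicative.ofAdd (-X), ?_, Multiplicative.ofAdd y, Subgroup.mem_top _, rfl⟩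
  rw [ofAdd_neg]
  exact inv_mem hX

/- ---------------- the inner development ---------------- -/

section Inner

variable (n' q' : ℕ)

def ReqBase (X Y : B) : Prop :=
  X ∈ rightSeries B (q' + 1) ∧ Y ∈ rightSeries B (q' + 1) ∧
  ∀ d, -(star Y d) + star X d ∈ upperCentralSet B n'

def Req : ℕ → B → B → Prop
  | 0 => fun X Y => ReqBase n' q' X Y
  | s + 1 => fun X Y => ReqBase n' q' X Y ∧ ∀ c, Req s (rho X c) (rho Y c)

inductive Rep : B → Prop
  | zero : Rep 0
  | pos (g v e X : B) (hv : v ∈ rightSeries B q') (hX : Rep X) :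
      Rep (cg g (star v e) + X)
  | neg (g v e X : B) (hv : v ∈ rightSeries B q') (hX : Rep X) :
      Rep (-(cg g (star v e)) + X)

variable {n' q'}

lemma req_base {s : ℕ} {X Y : B} (h : Req n' q' s X Y) : ReqBase n' q' X Y := by
  cases s with
  | zero => exact h
  | succ s => exact h.1

lemma req_rho {s : ℕ} {X Y : B} (h : Req n' q' (s + 1) X Y) (c : B) :
    Req n' q' s (rho X c) (rho Y c) := h.2 c


lemma rep_mem {x : B} (h : Rep q' x) : x ∈ rightSeries B (q' + 1) := by
  induction h with
  | zero => exact AddSubgroup.zero_mem _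
  | pos g v e X hv hX ih =>
    exact AddSubgroup.add_mem _ (cg_mem_R (star_mem_R hv e) g) ih
  | neg g v e X hv hX ih =>
    exact AddSubgroup.add_mem _ (AddSubgroup.neg_mem _ (cg_mem_R (star_mem_R hv e) g)) ih

lemma rep_single {v : B} (hv : v ∈ rightSeries B q') (e : B) : Rep q' (star v e) := by
  have := Rep.pos 0 v e 0 hv Rep.zero
  rwa [cg_zero_left, add_zero] at this

lemma rep_add {x y : B} (hx : Rep q' x) (hy : Rep q' y) : Rep q' (x + y) := by
  induction hx with
  | zero => rwa [zero_add]
  | pos g v e X hv hX ih =>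
    rw [add_assoc]; exact Rep.pos g v e _ hv ih
  | neg g v e X hv hX ih =>
    rw [add_assoc]; exact Rep.neg g v e _ hv ih

lemma rep_neg {x : B} (hx : Rep q' x) : Rep q' (-x) := by
  induction hx with
  | zero => rw [neg_zero]; exact Rep.zero
  | pos g v e X hv hX ih =>
    rw [neg_add_rev]
    refine rep_add ih ?_
    have := Rep.neg g v e 0 hv Rep.zero
    rwa [add_zero] at this
  | neg g v e X hv hX ih =>
    rw [neg_add_rev, neg_neg]
    refine rep_add ih ?_
    have := Rep.pos g v e 0 hv Rep.zero
    rwa [add_zero] at this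

lemma rep_cg {x : B} (hx : Rep q' x) (g : B) : Rep q' (cg g x) := by
  induction hx with
  | zero => rw [cg_zero_right]; exact Rep.zero
  | pos h v e X hv hX ih =>
    rw [cg_add, cg_cg]; exact Rep.pos (g + h) v e _ hv ih
  | neg h v e X hv hX ih =>
    rw [cg_add, cg_neg, cg_cg]; exact Rep.neg (g + h) v e _ hv ih

lemma rep_rho {x : B} (hx : Rep q' x) (c : B) : Rep q' (rho x c) :=
  rep_add (rep_neg hx) (rep_cg hx c)

lemma rep_of_mem {x : B} (hx : x ∈ rightSeries B (q' + 1)) : Rep q' x := by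
  have hmem : x ∈ AddSubgroup.closure (Set.image2 star
      ((rightSeries B q' : AddSubgroup B) : Set B) Set.univ) := hx
  clear hx
  induction hmem using AddSubgroup.closure_induction with
  | mem y hy => obtain ⟨a, ha, c, -, rfl⟩ := hy; exact rep_single ha c
  | zero => exact Rep.zero
  | add y z hy hz hy' hz' => exact rep_add hy' hz'
  | neg y hy hy' => exact rep_neg hy'

lemma rep_memB2 {x : B} (h : Rep q' x) : x ∈ leftSeries B 1 :=
  R_le_B2 (Nat.succ_le_succ (Nat.zero_le _)) (rep_mem h)

end Inner

end SkewBrace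

namespace SkewBrace

variable {B : Type*} [SkewBrace B]

section Cong

variable {n' : ℕ}

lemma cong_symm {a b : B} (h : -b + a ∈ upperCentralSet B n') :
    -a + b ∈ upperCentralSet B n' := by
  have := zs_neg h
  rwa [neg_add_rev, neg_neg] at this

lemma cong_trans {a b c : B} (h1 : -b + a ∈ upperCentralSet B n')
    (h2 : -c + b ∈ upperCentralSet B n') : -c + a ∈ upperCentralSet B n' := by
  have : -c + a = (-c + b) + (-b + a) := by
    rw [add_assoc, add_neg_cancel_left]
  rw [this]
  exact zs_add h2 h1

lemma cong_add {a b c d : B} (h1 : -b + a ∈ upperCentralSet B n')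
    (h2 : -d + c ∈ upperCentralSet B n') (hd : d ∈ leftSeries B 1) :
    -(b + d) + (a + c) ∈ upperCentralSet B n' := by
  have key : -(b + d) + (a + c) = ((-d) + (-b + a) - (-d)) + (-d + c) := by
    simp only [sub_eq_add_neg, neg_add_rev, neg_neg, add_assoc, neg_add_cancel_left,
      add_neg_cancel_left]
  rw [key]
  exact zs_add (zs_conj h1 (AddSubgroup.neg_mem _ hd)) h2

end Cong

section Inner2

variable (hb : ∀ x z : B, z ∈ leftSeries B 1 → star x z = 0)
variable {n' q' : ℕ}
variable (hyp : ∀ v ∈ rightSeries B (q' + 1), ∀ d, star v d ∈ upperCentralSet B (n' + 1))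

lemma req_refl (s : ℕ) {X : B} (hX : X ∈ rightSeries B (q' + 1)) : Req n' q' s X X := by
  induction s generalizing X with
  | zero => exact ⟨hX, hX, fun d => by rw [neg_add_cancel]; exact zs_zero _⟩
  | succ s ih =>
    exact ⟨⟨hX, hX, fun d => by rw [neg_add_cancel]; exact zs_zero _⟩,
      fun c => ih (rho_mem_R hX c)⟩

lemma req_symm {s : ℕ} {X Y : B} (h : Req n' q' s X Y) : Req n' q' s Y X := by
  induction s generalizing X Y with
  | zero => exact ⟨h.2.1, h.1, fun d => cong_symm (h.2.2 d)⟩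
  | succ s ih =>
    exact ⟨⟨h.1.2.1, h.1.1, fun d => cong_symm (h.1.2.2 d)⟩, fun c => ih (h.2 c)⟩

lemma req_trans {s : ℕ} {X Y Z : B} (h1 : Req n' q' s X Y) (h2 : Req n' q' s Y Z) :
    Req n' q' s X Z := by
  induction s generalizing X Y Z with
  | zero => exact ⟨h1.1, h2.2.1, fun d => cong_trans (h1.2.2 d) (h2.2.2 d)⟩
  | succ s ih =>
    exact ⟨⟨h1.1.1, h2.1.2.1, fun d => cong_trans (h1.1.2.2 d) (h2.1.2.2 d)⟩,
      fun c => ih (h1.2 c) (h2.2 c)⟩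

include hb hyp

/-- level-0 GOLD : `star u e ≈₀ rho u e` -/
lemma push0 {u : B} (hu : u ∈ rightSeries B (q' + 1)) (e : B) :
    ReqBase n' q' (star u e) (rho u e) := by
  have huB2 : u ∈ leftSeries B 1 := R_le_B2 (by omega) hu
  have hu' : u ∈ rightSeries B q' := R_succ_le q' hu
  refine ⟨star_mem_R hu' e, rho_mem_R hu e, fun d => ?_⟩
  have h1 : star (star u e) d
      = star (cg e u) d + (star (-e) d + (-(star u d) + -(star (-e) d))) :=
    gold hb huB2 e d
  have h2 : star (rho u e) d = star (cg e u) d + -(star u d) := by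
    rw [rho, anti_add hb (cg_mem_B2 huB2 e), neg_star hb huB2]
  rw [h1, h2]
  have key : -(star (cg e u) d + -(star u d))
        + (star (cg e u) d + (star (-e) d + (-(star u d) + -(star (-e) d))))
      = star u d + star (-e) d - star u d - star (-e) d := by
    simp only [sub_eq_add_neg, neg_add_rev, neg_neg, add_assoc, neg_add_cancel_left]
  rw [key]
  exact zs_comm (hyp u hu d) (star_mem_B2 (-e) d)

/-- level-0 inertness of B²-conjugation -/
lemma inert0 {u W : B} (hu : u ∈ leftSeries B 1) (hW : W ∈ rightSeries B (q' + 1)) :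
    ReqBase n' q' (cg u W) W := by
  have hWB2 : W ∈ leftSeries B 1 := R_le_B2 (by omega) hW
  refine ⟨cg_mem_R hW u, hW, fun d => ?_⟩
  rw [star_conj_b2 hb hu hWB2]
  have key : -(star W d) + (-(star u d) + (star W d + star u d))
      = (-(star W d)) + (-(star u d)) - (-(star W d)) - (-(star u d)) := by
    simp only [sub_eq_add_neg, neg_neg, add_assoc]
  rw [key]
  exact zs_comm (zs_neg (hyp W hW d)) (AddSubgroup.neg_mem _ (star_mem_B2 u d))

omit hyp in
/-- level-0 sum congruence -/
lemma sum0 {X₁ Y₁ X₂ Y₂ : B} (h1 : ReqBase n' q' X₁ Y₁) (h2 : ReqBase n' q' X₂ Y₂) :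
    ReqBase n' q' (X₁ + X₂) (Y₁ + Y₂) := by
  obtain ⟨m1, m1', c1⟩ := h1
  obtain ⟨m2, m2', c2⟩ := h2
  refine ⟨AddSubgroup.add_mem _ m1 m2, AddSubgroup.add_mem _ m1' m2', fun d => ?_⟩
  have e1 : star (X₁ + X₂) d = star X₂ d + star X₁ d :=
    anti_add hb (R_le_B2 (by omega) m2) X₁ d
  have e2 : star (Y₁ + Y₂) d = star Y₂ d + star Y₁ d :=
    anti_add hb (R_le_B2 (by omega) m2') Y₁ d
  rw [e1, e2]
  exact cong_add (c2 d) (c1 d) (star_mem_B2 Y₁ d)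

omit hyp in
/-- level-0 negation congruence -/
lemma neg0 {X Y : B} (h : ReqBase n' q' X Y) : ReqBase n' q' (-X) (-Y) := by
  obtain ⟨m1, m2, c⟩ := h
  refine ⟨AddSubgroup.neg_mem _ m1, AddSubgroup.neg_mem _ m2, fun d => ?_⟩
  rw [neg_star hb (R_le_B2 (by omega) m1), neg_star hb (R_le_B2 (by omega) m2), neg_neg]
  have key : star Y d + -(star X d)
      = (star Y d) + (-(star X d) + star Y d) - (star Y d) := by
    simp only [sub_eq_add_neg, add_assoc, add_neg_cancel_left, add_neg_cancel, add_zero]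
  rw [key]
  have hmem : -(star X d) + star Y d ∈ upperCentralSet B n' := cong_symm (c d)
  exact zs_conj hmem (star_mem_B2 Y d)

end Inner2

end SkewBrace

namespace SkewBrace

variable {B : Type*} [SkewBrace B]

section Tower

def SL (B : Type*) [SkewBrace B] (n' q' s : ℕ) : Prop :=
  ∀ X₁ Y₁ X₂ Y₂ : B, Rep q' X₁ → Rep q' Y₁ → Rep q' X₂ →
  Rep q' Y₂ → Req n' q' s X₁ Y₁ → Req n' q' s X₂ Y₂ → Req n' q' s (X₁ + X₂) (Y₁ + Y₂)

def NL (B : Type*) [SkewBrace B] (n' q' s : ℕ) : Prop :=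
  ∀ X Y : B, Rep q' X → Rep q' Y → Req n' q' s X Y → Req n' q' s (-X) (-Y)

def IL (B : Type*) [SkewBrace B] (n' q' s : ℕ) : Prop :=
  ∀ u W : B, u ∈ leftSeries B 1 → Rep q' W → Req n' q' s (cg u W) W

def LL (B : Type*) [SkewBrace B] (n' q' s : ℕ) : Prop :=
  ∀ V : B, Rep q' V → ∀ U c : B, U ∈ leftSeries B 1 →
  Req n' q' s (rho V (U + c - U)) (rho V c)

def PL (B : Type*) [SkewBrace B] (n' q' s : ℕ) : Prop :=
  ∀ u e : B, Rep q' u → Req n' q' s (star u e) (rho u e)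

variable {n' q' : ℕ}
variable (hb : ∀ x z : B, z ∈ leftSeries B 1 → star x z = 0)
variable (hyp : ∀ v ∈ rightSeries B (q' + 1), ∀ d, star v d ∈ upperCentralSet B (n' + 1))

include hb

/-- letters of atom-commutators only matter modulo B² (exact identity) -/
lemma atom_letter {U₀ : B} (hU : U₀ ∈ leftSeries B 1) (v e x : B) :
    rho (star v e) (U₀ + x - U₀) = rho (star v e) x := by
  have hδ : -x + U₀ + x - U₀ ∈ leftSeries B 1 := by
    have h1 : -x + U₀ + x ∈ leftSeries B 1 := by
      have := conj_mem_B2 hU (-x)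
      rwa [sub_neg_eq_add] at this
    exact AddSubgroup.sub_mem _ h1 hU
  have hL : U₀ + x - U₀ = x + (-x + U₀ + x - U₀) := by
    simp only [sub_eq_add_neg, add_assoc, add_neg_cancel_left]
  have e1 : star v (U₀ + x - U₀) = star v x := by
    rw [hL, star_letter hb hδ]
  have e2 : star v ((U₀ + x - U₀) + e) = star v (x + e) := by
    have hδ₂ : -e + (-x + U₀ + x - U₀) + e ∈ leftSeries B 1 := by
      have := conj_mem_B2 hδ (-e)
      rwa [sub_neg_eq_add] at this
    have hrw : (U₀ + x - U₀) + e = (x + e) + (-e + (-x + U₀ + x - U₀) + e) := by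
      rw [hL]
      simp only [sub_eq_add_neg, add_assoc, add_neg_cancel_left, neg_add_cancel_left]
    rw [hrw, star_letter hb hδ₂]
  rw [rho, rho, cg_star, cg_star, e1, e2]

lemma letter_of (s : ℕ) (hS : SL B n' q' s) : LL B n' q' s := by
  intro V hV
  induction hV with
  | zero =>
    intro U c hU
    rw [rho_zero, rho_zero]
    exact req_refl s (AddSubgroup.zero_mem _)
  | pos g v e X hv hX ih =>
    intro U c hU
    have hArep : Rep q' (cg g (star v e)) := by
      have := Rep.pos g v e 0 hv Rep.zero
      rwa [add_zero] at this
    have keyA : rho (cg g (star v e)) (U + c - U) = rho (cg g (star v e)) c := by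
      rw [rho_conj, rho_conj]
      congr 1
      have hU' : -g + U + g ∈ leftSeries B 1 := by
        have := conj_mem_B2 hU (-g)
        rwa [sub_neg_eq_add] at this
      have hident : -g + (U + c - U) + g
          = (-g + U + g) + (-g + c + g) - (-g + U + g) := by
        simp only [sub_eq_add_neg, neg_add_rev, neg_neg, add_assoc,
          neg_add_cancel_left, add_neg_cancel_left]
      rw [hident, atom_letter hb hU']
    rw [rho_add, rho_add, keyA]
    have hfixed : Rep q' (cg (-X) (rho (cg g (star v e)) c)) :=
      rep_cg (rep_rho hArep c) (-X)
    exact hS _ _ _ _ hfixed hfixed (rep_rho hX _) (rep_rho hX c)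
      (req_refl s (rep_mem hfixed)) (ih U c hU)
  | neg g v e X hv hX ih =>
    intro U c hU
    have hArep : Rep q' (-(cg g (star v e))) := by
      have := Rep.neg g v e 0 hv Rep.zero
      rwa [add_zero] at this
    have keyA0 : rho (cg g (star v e)) (U + c - U) = rho (cg g (star v e)) c := by
      rw [rho_conj, rho_conj]
      congr 1
      have hU' : -g + U + g ∈ leftSeries B 1 := by
        have := conj_mem_B2 hU (-g)
        rwa [sub_neg_eq_add] at this
      have hident : -g + (U + c - U) + g
          = (-g + U + g) + (-g + c + g) - (-g + U + g) := by
        simp only [sub_eq_add_neg, neg_add_rev, neg_neg, add_assoc,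
          neg_add_cancel_left, add_neg_cancel_left]
      rw [hident, atom_letter hb hU']
    have keyA : rho (-(cg g (star v e))) (U + c - U) = rho (-(cg g (star v e))) c := by
      rw [rho_neg, rho_neg, keyA0]
    rw [rho_add, rho_add, keyA]
    have hfixed : Rep q' (cg (-X) (rho (-(cg g (star v e))) c)) :=
      rep_cg (rep_rho hArep c) (-X)
    exact hS _ _ _ _ hfixed hfixed (rep_rho hX _) (rep_rho hX c)
      (req_refl s (rep_mem hfixed)) (ih U c hU)

include hyp

lemma inert_of (s : ℕ) (hI : IL B n' q' s) (hL : LL B n' q' s) : IL B n' q' (s + 1) := by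
  intro u W hu rW
  refine ⟨inert0 hb hyp hu (rep_mem rW), fun c => ?_⟩
  rw [rho_conj]
  have t1 : Req n' q' s (cg u (rho W (-u + c + u))) (rho W (-u + c + u)) :=
    hI u _ hu (rep_rho rW _)
  have t2 : Req n' q' s (rho W (-u + c + u)) (rho W c) := by
    have := hL W rW (-u) c (AddSubgroup.neg_mem _ hu)
    rwa [sub_neg_eq_add] at this
  exact req_trans t1 t2

lemma sum_of (s : ℕ) (hI : IL B n' q' s) (hS : SL B n' q' s) : SL B n' q' (s + 1) := by
  intro X₁ Y₁ X₂ Y₂ r1 r2 r3 r4 h1 h2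
  refine ⟨sum0 hb (req_base h1) (req_base h2), fun c => ?_⟩
  rw [rho_add, rho_add]
  have t1 : Req n' q' s (cg (-X₂) (rho X₁ c)) (rho X₁ c) :=
    hI _ _ (AddSubgroup.neg_mem _ (rep_memB2 r3)) (rep_rho r1 c)
  have t2 : Req n' q' s (rho X₁ c) (rho Y₁ c) := req_rho h1 c
  have t3 : Req n' q' s (rho Y₁ c) (cg (-Y₂) (rho Y₁ c)) :=
    req_symm (hI _ _ (AddSubgroup.neg_mem _ (rep_memB2 r4)) (rep_rho r2 c))
  exact hS _ _ _ _ (rep_cg (rep_rho r1 c) _) (rep_cg (rep_rho r2 c) _)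
    (rep_rho r3 c) (rep_rho r4 c)
    (req_trans t1 (req_trans t2 t3)) (req_rho h2 c)

lemma neg_of (s : ℕ) (hI : IL B n' q' s) (hN : NL B n' q' s) : NL B n' q' (s + 1) := by
  intro X Y rX rY h
  refine ⟨neg0 hb (req_base h), fun c => ?_⟩
  rw [rho_neg, rho_neg]
  have t1 : Req n' q' s (cg X (-(rho X c))) (-(rho X c)) :=
    hI _ _ (rep_memB2 rX) (rep_neg (rep_rho rX c))
  have t2 : Req n' q' s (-(rho X c)) (-(rho Y c)) :=
    hN _ _ (rep_rho rX c) (rep_rho rY c) (req_rho h c)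
  have t3 : Req n' q' s (-(rho Y c)) (cg Y (-(rho Y c))) :=
    req_symm (hI _ _ (rep_memB2 rY) (rep_neg (rep_rho rY c)))
  exact req_trans t1 (req_trans t2 t3)

lemma push_of (s : ℕ) (hP : PL B n' q' s) (hS : SL B n' q' s) (hN : NL B n' q' s) :
    PL B n' q' (s + 1) := by
  intro u e hu
  have hmem : u ∈ rightSeries B (q' + 1) := rep_mem hu
  have hu' : u ∈ rightSeries B q' := R_succ_le q' hmem
  refine ⟨push0 hb hyp hmem e, fun c => ?_⟩
  have decompL : rho (star u e) c = -(star u e) + (-(star u c) + star u (c + e)) := by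
    rw [rho, cg_star]
  have decompR : rho (rho u e) c = -(rho u e) + (-(rho u c) + rho u (c + e)) := by
    rw [rho]
    congr 1
    rw [rho_cocycle u c e, neg_add_cancel_left]
  rw [decompL, decompR]
  have pair1 : Req n' q' s (-(star u e)) (-(rho u e)) :=
    hN _ _ (rep_single hu' e) (rep_rho hu e) (hP u e hu)
  have pair2a : Req n' q' s (-(star u c)) (-(rho u c)) :=
    hN _ _ (rep_single hu' c) (rep_rho hu c) (hP u c hu)
  have pair2b : Req n' q' s (star u (c + e)) (rho u (c + e)) := hP u (c + e) hu
  have pair2 : Req n' q' s (-(star u c) + star u (c + e)) (-(rho u c) + rho u (c + e)) :=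
    hS _ _ _ _ (rep_neg (rep_single hu' c)) (rep_neg (rep_rho hu c))
      (rep_single hu' (c + e)) (rep_rho hu (c + e)) pair2a pair2b
  exact hS _ _ _ _ (rep_neg (rep_single hu' e)) (rep_neg (rep_rho hu e))
    (rep_add (rep_neg (rep_single hu' c)) (rep_single hu' (c + e)))
    (rep_add (rep_neg (rep_rho hu c)) (rep_rho hu (c + e))) pair1 pair2

lemma tower : ∀ s, SL B n' q' s ∧ NL B n' q' s ∧ IL B n' q' s ∧ LL B n' q' s ∧ PL B n' q' s := by
  intro s
  induction s with
  | zero =>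
    have hS : SL B n' q' 0 := fun X₁ Y₁ X₂ Y₂ _ _ _ _ h1 h2 => sum0 hb h1 h2
    have hN : NL B n' q' 0 := fun X Y _ _ h => neg0 hb h
    have hI : IL B n' q' 0 := fun u W hu rW => inert0 hb hyp hu (rep_mem rW)
    exact ⟨hS, hN, hI, letter_of hb 0 hS, fun u e hu => push0 hb hyp (rep_mem hu) e⟩
  | succ s ih =>
    obtain ⟨hS, hN, hI, hL, hP⟩ := ih
    have hS' := sum_of hb hyp s hI hS
    exact ⟨hS', neg_of hb hyp s hI hN, inert_of hb hyp s hI hL,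
      letter_of hb (s + 1) hS', push_of hb hyp s hP hS hN⟩

end Tower

end SkewBrace

namespace SkewBrace

variable {B : Type*} [SkewBrace B]

section Descent

variable {n' q' : ℕ}

def Drop (n' : ℕ) : ℕ → B → Prop
  | 0 => fun X => ∀ d, star X d ∈ upperCentralSet B n'
  | s + 1 => fun X => ∀ y, Drop n' s (star X y)

lemma drop_zero_elt : ∀ s, Drop (B := B) n' s 0 := by
  intro s
  induction s with
  | zero => intro d; rw [star_zero_left]; exact zs_zero _
  | succ s ih => intro y; rw [star_zero_left]; exact ih

variable (hb : ∀ x z : B, z ∈ leftSeries B 1 → star x z = 0)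
variable (hyp : ∀ v ∈ rightSeries B (q' + 1), ∀ d, star v d ∈ upperCentralSet B (n' + 1))

include hb in
lemma drop_add : ∀ (j : ℕ) {x y : B}, x ∈ leftSeries B 1 → y ∈ leftSeries B 1 →
    Drop n' j x → Drop n' j y → Drop n' j (x + y) := by
  intro j
  induction j with
  | zero =>
    intro x y hx hy dx dy d
    rw [anti_add hb hy]
    exact zs_add (dy d) (dx d)
  | succ j ih =>
    intro x y hx hy dx dy c
    have e := anti_add hb hy x c
    rw [e]
    exact ih (star_mem_B2 y c) (star_mem_B2 x c) (dy c) (dx c)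

include hb in
lemma drop_neg : ∀ (j : ℕ) {x : B}, x ∈ leftSeries B 1 →
    Drop n' j x → Drop n' j (-x) := by
  intro j
  induction j with
  | zero => intro x hx dx d; rw [neg_star hb hx]; exact zs_neg (dx d)
  | succ j ih =>
    intro x hx dx y
    rw [neg_star hb hx]
    exact ih (star_mem_B2 x y) (dx y)

include hb hyp

lemma transfer : ∀ (s : ℕ) {X Y : B}, Rep q' X → Rep q' Y → Req n' q' s X Y →
    Drop n' s Y → Drop n' s X := by
  intro s
  induction s with
  | zero =>
    intro X Y rX rY h dY d
    have cong := h.2.2 d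
    have : star X d = star Y d + (-(star Y d) + star X d) :=
      (add_neg_cancel_left _ _).symm
    rw [this]
    exact zs_add (dY d) cong
  | succ s ih =>
    intro X Y rX rY h dY y
    have hPL := (tower hb hyp s).2.2.2.2
    have t1 : Req n' q' s (star X y) (rho X y) := hPL X y rX
    have t2 : Req n' q' s (rho X y) (rho Y y) := req_rho h y
    have t3 : Req n' q' s (rho Y y) (star Y y) := req_symm (hPL Y y rY)
    have rX' : Rep q' (star X y) :=
      rep_single (R_succ_le _ (rep_mem rX)) y
    have rY' : Rep q' (star Y y) :=
      rep_single (R_succ_le _ (rep_mem rY)) y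
    exact ih rX' rY' (req_trans t1 (req_trans t2 t3)) (dY y)

variable {m : ℕ} (hbot : (⊤ : Subgroup (Multiplicative B)).lowerCentralSeries m = ⊥)

include hbot

lemma descent : ∀ (t : ℕ) {X : B}, Rep q' X →
    Multiplicative.ofAdd X ∈ (⊤ : Subgroup (Multiplicative B)).lowerCentralSeries (m - t) →
    Drop n' t X := by
  intro t
  induction t with
  | zero =>
    intro X rX hX
    rw [Nat.sub_zero, hbot, Subgroup.mem_bot] at hX
    have : X = 0 := congrArg Multiplicative.toAdd hX
    rw [this]
    exact drop_zero_elt 0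
  | succ t ih =>
    intro X rX hX y
    have hPL := (tower hb hyp t).2.2.2.2
    have hreq : Req n' q' t (star X y) (rho X y) := hPL X y rX
    have hlcs : Multiplicative.ofAdd (rho X y)
        ∈ (⊤ : Subgroup (Multiplicative B)).lowerCentralSeries (m - t) := by
      rcases le_or_gt (t + 1) m with hle | hlt
      · have harith : m - t = (m - (t + 1)) + 1 := by omega
        rw [harith]
        exact lcs_rho hX y
      · have harith : m - t = 0 := by omega
        rw [harith, lowerCentralSeries_zero]
        exact Subgroup.mem_top _
    have rX' : Rep q' (star X y) := rep_single (R_succ_le _ (rep_mem rX)) y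
    exact transfer hb hyp t rX' (rep_rho rX y) hreq (ih (rep_rho rX y) hlcs)

theorem inner_main : ∀ v ∈ rightSeries B (q' + 1 + m),
    v ∈ leftSeries B 1 ∧ ∀ d, star v d ∈ upperCentralSet B n' := by
  have stage : ∀ s, s ≤ m → ∀ v ∈ rightSeries B (q' + 1 + s), Drop n' (m - s) v := by
    intro s
    induction s with
    | zero =>
      intro _ v hv
      rw [Nat.sub_zero]
      apply descent hb hyp hbot m (rep_of_mem (by rwa [Nat.add_zero] at hv))
      rw [Nat.sub_self, lowerCentralSeries_zero]
      exact Subgroup.mem_top _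
    | succ s ih =>
      intro hs v hv
      have hv' : v ∈ AddSubgroup.closure (Set.image2 star
          ((rightSeries B (q' + 1 + s) : AddSubgroup B) : Set B) Set.univ) := hv
      clear hv
      have harith : m - s = (m - (s + 1)) + 1 := by omega
      have key : v ∈ leftSeries B 1 ∧ Drop n' (m - (s + 1)) v := by
        induction hv' using AddSubgroup.closure_induction with
        | mem y hy =>
          obtain ⟨w, hw, e, -, rfl⟩ := hy
          have dw : Drop n' (m - s) w := ih (Nat.le_of_succ_le hs) w hw
          rw [harith] at dw
          exact ⟨star_mem_B2 w e, dw e⟩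
        | zero => exact ⟨AddSubgroup.zero_mem _, drop_zero_elt _⟩
        | add x y hx hy hx' hy' =>
          exact ⟨AddSubgroup.add_mem _ hx'.1 hy'.1,
            drop_add hb _ hx'.1 hy'.1 hx'.2 hy'.2⟩
        | neg x hx hx' =>
          exact ⟨AddSubgroup.neg_mem _ hx'.1, drop_neg hb _ hx'.1 hx'.2⟩
      exact key.2
  intro v hv
  refine ⟨R_le_B2 (by omega) hv, ?_⟩
  have := stage m le_rfl v hv
  rwa [Nat.sub_self] at this

end Descent

end SkewBrace

open SkewBrace in
/-- If `B³ = 0`, `(B,+)` is nilpotent of class `m` and `(B²,+)` is nilpotent of class `r`,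
then `B^{(2+m·k)} ⊆ S_{r-k}` for every `1 ≤ k ≤ r`.
(`rightSeries B n = B^{(n+1)}`, so `B^{(2+m·k)} = rightSeries B (1 + m * k)`.) -/
theorem rightSeries_subset_Sset (B : Type*) [SkewBrace B] (m r : ℕ)
    [Group.IsNilpotent (Multiplicative B)]
    (hm : Group.nilpotencyClass (Multiplicative B) = m)
    [Group.IsNilpotent (Multiplicative ↥(leftSeries B 1))]
    (hr : Group.nilpotencyClass (Multiplicative ↥(leftSeries B 1)) = r)
    (h3 : leftSeries B 2 = ⊥) :
    ∀ k : ℕ, 1 ≤ k → k ≤ r →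
      (rightSeries B (1 + m * k) : Set B) ⊆ Sset B (r - k) := by
  have hb : ∀ x z : B, z ∈ leftSeries B 1 → star x z = 0 := by
    intro x z hz
    have hmem : star x z ∈ leftSeries B 2 := by
      apply AddSubgroup.subset_closure
      exact Set.mem_image2_of_mem trivial hz
    rw [h3] at hmem
    exact AddSubgroup.mem_bot.mp hmem
  have hbot : (⊤ : Subgroup (Multiplicative B)).lowerCentralSeries m = ⊥ := by
    rw [← hm]; exact lowerCentralSeries_nilpotencyClass
  have htop : upperCentralSeries (Multiplicative ↥(leftSeries B 1)) r = ⊤ := by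
    rw [← hr]; exact upperCentralSeries_nilpotencyClass
  intro k hk1
  revert hk1
  induction k with
  | zero => intro h; omega
  | succ k ih =>
    intro _ hkr
    rcases Nat.eq_or_lt_of_le (Nat.one_le_iff_ne_zero.mpr (Nat.succ_ne_zero k)) with heq | hlt
    · -- base case k + 1 = 1
      have hk0 : k = 0 := by omega
      subst hk0
      have hyp : ∀ v ∈ rightSeries B (0 + 1), ∀ d,
          star v d ∈ upperCentralSet B ((r - 1) + 1) := by
        intro v _ d
        have e : (r - 1) + 1 = r := by omega
        rw [e]
        exact ⟨star_mem_B2 v d, by rw [htop]; exact Subgroup.mem_top _⟩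
      have key := inner_main hb hyp hbot
      have e3 : 1 + m * 1 = 0 + 1 + m := by omega
      intro v hv
      rw [e3] at hv
      obtain ⟨hv1, hv2⟩ := key v hv
      exact ⟨hv1, hv2⟩
    · -- inductive step : k ≥ 1
      have hk1 : 1 ≤ k := by omega
      have prev := ih hk1 (by omega)
      have hyp : ∀ v ∈ rightSeries B (m * k + 1), ∀ d,
          star v d ∈ upperCentralSet B ((r - k - 1) + 1) := by
        intro v hv d
        have e1 : m * k + 1 = 1 + m * k := by omega
        rw [e1] at hv
        have hvS := prev hv
        have e2 : (r - k - 1) + 1 = r - k := by omega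
        rw [e2]
        exact hvS.2 d
      have key := inner_main hb hyp hbot
      have e3 : 1 + m * (k + 1) = m * k + 1 + m := by rw [Nat.mul_succ]; omega
      have e4 : r - (k + 1) = r - k - 1 := by omega
      intro v hv
      rw [e3] at hv
      rw [e4]
      obtain ⟨hv1, hv2⟩ := key v hv
      exact ⟨hv1, hv2⟩
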